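/- Let R be a finite commutative chain ring with maximal ideal generated by π of nilpotency index ν and residue field F_q, and S a Galois extension of R of degree m with residue field F_{q^m} and natural projection Ψ : S → F_{q^m}, extended coefficient-by-coefficient to S^n. For any a ∈ S^n, rk_R(π^(ν−1) a) = rk_{F_q}(Ψ(a)). -/

import Mathlib

open IsLocalRing

/-- The rank of a submodule `N`: the smallest number of elements generating `N`. -/
noncomputable def subrank {R M : Type*} [Semiring R] [AddCommMonoid M] [Module R M]
    (N : Submodule R M) : ℕ :=
  sInf {k | ∃ f : Fin k → M, Submodule.span R (Set.range f) = N}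

/-- The rank of a vector `u ∈ S^n` over `R`: the smallest number of generators of the
`R`-submodule of `S` generated by the coordinates of `u` (i.e. of the support of `u`). -/
noncomputable def vecrank (R : Type*) {S : Type*} {n : ℕ} [Semiring R] [AddCommMonoid S]
    [Module R S] (u : Fin n → S) : ℕ :=
  subrank (Submodule.span R (Set.range u))

/-- The minimum rank distance of a linear code `C ⊆ S^n`, ranks being taken over `K`. -/
noncomputable def minrkdist (K : Type*) {S : Type*} {n : ℕ} [Semiring K] [Ring S]
    [Module K S] (C : Submodule S (Fin n → S)) : ℕ :=
  sInf {d | ∃ u ∈ C, ∃ v ∈ C, u ≠ v ∧ vecrank K (u - v) = d}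

/-- Let `R` be a finite commutative chain ring with maximal ideal generated
by `π` of nilpotency index `ν` and residue field `F_q`, and `S` a Galois extension of `R` of
degree `m` with residue field `F_{q^m}` and natural projection `Ψ : S → F_{q^m}`, extended
coefficient-by-coefficient to `S^n`.  For any `a ∈ S^n`,
`rk_R(π^(ν−1) a) = rk_{F_q}(Ψ(a))`. -/
theorem rank_smul_pow_eq_rank_residue
    (R S : Type*) [CommRing R] [Finite R] [IsLocalRing R] [IsPrincipalIdealRing R]
    [CommRing S] [Finite S] [IsLocalRing S] [IsPrincipalIdealRing S]
    [Algebra R S] [IsLocalHom (algebraMap R S)] [Module.Free R S]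
    (π : R) (hπ : Ideal.span {π} = maximalIdeal R)
    (ν : ℕ) (hν : 0 < ν) (hνnil : π ^ ν = 0) (hνmin : π ^ (ν - 1) ≠ 0)
    (m : ℕ) (hm : Module.finrank R S = m)
    (hGal : maximalIdeal S = Ideal.map (algebraMap R S) (maximalIdeal R))
    (n : ℕ) (a : Fin n → S) :
    letI : Module (ResidueField R) (ResidueField S) :=
      (ResidueField.map (algebraMap R S)).toAlgebra.toModule
    vecrank R (π ^ (ν - 1) • a) =
      vecrank (ResidueField R) (fun i => residue S (a i)) := by
  letI : Algebra (ResidueField R) (ResidueField S) :=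
    (ResidueField.map (algebraMap R S)).toAlgebra
  letI : Module (ResidueField R) (ResidueField S) := Algebra.toModule
  show vecrank R (π ^ (ν - 1) • a) = vecrank (ResidueField R) (fun i => residue S (a i))
  -- π'^{ν-1} ≠ 0 in S
  have hanti : algebraMap R S (π ^ (ν - 1)) ≠ 0 := by
    intro h
    apply hνmin
    have b := Module.Free.chooseBasis R S
    have : Nontrivial S := inferInstance
    obtain ⟨i⟩ := b.index_nonempty
    have h1 : (π ^ (ν - 1)) • b i = 0 := by
      rw [Algebra.smul_def, h, zero_mul]
    have h2 := congrArg (fun z => (b.repr z) i) h1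
    simpa using h2
  have hMS : maximalIdeal S = Ideal.span {algebraMap R S π} := by
    rw [hGal, ← hπ, Ideal.map_span, Set.image_singleton]
  -- kernel fact
  have hker : ∀ z : S, π ^ (ν - 1) • z = 0 ↔ residue S z = 0 := by
    intro z
    rw [Algebra.smul_def]
    constructor
    · intro h
      rw [residue_eq_zero_iff]
      by_contra hz
      have hu : IsUnit z := by
        by_contra h'
        exact hz ((IsLocalRing.mem_maximalIdeal z).mpr h')
      obtain ⟨u, rfl⟩ := hu
      apply hanti
      calc algebraMap R S (π ^ (ν-1)) = algebraMap R S (π ^ (ν-1)) * u * ↑u⁻¹ := by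
            rw [mul_assoc, Units.mul_inv, mul_one]
        _ = 0 := by rw [h, zero_mul]
    · intro h
      rw [residue_eq_zero_iff, hMS, Ideal.mem_span_singleton'] at h
      obtain ⟨c, rfl⟩ := h
      rw [mul_comm c, ← mul_assoc, ← map_mul, ← pow_succ]
      have : ν - 1 + 1 = ν := Nat.succ_pred_eq_of_pos hν
      rw [this, hνnil, map_zero, zero_mul]
  have hsmul : ∀ (r : R) (ξ : ResidueField S),
      residue R r • ξ = residue S (algebraMap R S r) * ξ := by
    intro r ξ
    rw [Algebra.smul_def, RingHom.algebraMap_toAlgebra, ResidueField.map_residue]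
  have core : ∀ {t : ℕ} (b : Fin t → S) (x : S),
      (π ^ (ν - 1) • x ∈ Submodule.span R (Set.range (π ^ (ν - 1) • b)) ↔
       residue S x ∈
         Submodule.span (ResidueField R) (Set.range (fun i => residue S (b i)))) := by
    intro t b x
    rw [Submodule.mem_span_range_iff_exists_fun, Submodule.mem_span_range_iff_exists_fun]
    constructor
    · rintro ⟨c, hc⟩
      refine ⟨fun i => residue R (c i), ?_⟩
      have h0 : residue S (x - ∑ i, c i • b i) = 0 := by
        rw [← hker, smul_sub, sub_eq_zero, Finset.smul_sum, ← hc]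
        exact Finset.sum_congr rfl fun i _ => by rw [Pi.smul_apply, smul_comm]
      rw [map_sub, sub_eq_zero] at h0
      rw [h0, map_sum]
      exact Finset.sum_congr rfl fun i _ => by
        rw [hsmul, ← map_mul, ← Algebra.smul_def]
    · rintro ⟨d, hd⟩
      choose c hc using fun i => residue_surjective (R := R) (d i)
      have h0 : residue S (x - ∑ i, c i • b i) = 0 := by
        rw [map_sub, sub_eq_zero, map_sum, ← hd]
        exact Finset.sum_congr rfl fun i _ => by
          rw [← hc i, hsmul, ← map_mul, ← Algebra.smul_def]
      refine ⟨c, ?_⟩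
      have h1 : π ^ (ν - 1) • (x - ∑ i, c i • b i) = 0 := (hker _).mpr h0
      rw [smul_sub, sub_eq_zero] at h1
      rw [h1, Finset.smul_sum]
      exact Finset.sum_congr rfl fun i _ => by rw [Pi.smul_apply, smul_comm]
  unfold vecrank subrank
  congr 1
  ext t
  simp only [Set.mem_setOf_eq]
  constructor
  · rintro ⟨f, hf⟩
    have hx : ∀ i, ∃ x : S, π ^ (ν - 1) • x = f i := by
      intro i
      have hfi : f i ∈ Submodule.span R (Set.range (π ^ (ν - 1) • a)) := by
        rw [← hf]; exact Submodule.subset_span (Set.mem_range_self i)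
      have hle : Submodule.span R (Set.range (π ^ (ν - 1) • a)) ≤
          LinearMap.range (LinearMap.lsmul R S (π ^ (ν - 1))) := by
        rw [Submodule.span_le]
        rintro _ ⟨j, rfl⟩
        exact ⟨a j, rfl⟩
      exact hle hfi
    choose x hxx using hx
    have hfx : (π ^ (ν - 1) • x) = f := funext hxx
    refine ⟨fun i => residue S (x i), ?_⟩
    apply le_antisymm
    · rw [Submodule.span_le]
      rintro _ ⟨i, rfl⟩
      exact (core a (x i)).mp (by
        rw [show π ^ (ν - 1) • x i = f i from hxx i, ← hf]
        exact Submodule.subset_span (Set.mem_range_self i))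
    · rw [Submodule.span_le]
      rintro _ ⟨j, rfl⟩
      apply (core x (a j)).mp
      rw [hfx, hf]
      exact Submodule.subset_span (Set.mem_range_self j)
  · rintro ⟨g, hg⟩
    choose y hy using fun i => residue_surjective (R := S) (g i)
    have hgy : (fun i => residue S (y i)) = g := funext hy
    refine ⟨π ^ (ν - 1) • y, ?_⟩
    apply le_antisymm
    · rw [Submodule.span_le]
      rintro _ ⟨i, rfl⟩
      refine (core a (y i)).mpr ?_
      rw [hy i, ← hg]
      exact Submodule.subset_span (Set.mem_range_self i)
    · rw [Submodule.span_le]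
      rintro _ ⟨j, rfl⟩
      apply (core y (a j)).mpr
      rw [hgy, hg]
      exact Submodule.subset_span (Set.mem_range_self j)
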